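/- Let G be a group with subgroups H and G_0, and let G' be a complete set of representatives of the double cosets HgG_0, g ∈ G, in G. Then a global cross section exists for the action of H on G/G_0 (by h·(gG_0) = (hg)G_0) if and only if the subgroups H ∩ g'G_0g'^{-1}, g' ∈ G', are all conjugate to one another in H. -/

import Mathlib

/-- The double coset `H g G₀ = {h * g * g₀ : h ∈ H, g₀ ∈ G₀}` in `G`. -/
def doubleCoset {G : Type*} [Group G] (H G₀ : Subgroup G) (g : G) : Set G :=
  {x | ∃ h ∈ H, ∃ k ∈ G₀, x = h * g * k}

section aux

variable {G : Type*} [Group G] (H G₀ : Subgroup G)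

lemma mem_conj_map (g x : G) :
    x ∈ Subgroup.map (MulAut.conj g).toMonoidHom G₀ ↔ g⁻¹ * x * g ∈ G₀ := by
  simp only [Subgroup.mem_map, MulEquiv.coe_toMonoidHom, MulAut.conj_apply]
  constructor
  · rintro ⟨y, hy, rfl⟩
    simpa [mul_assoc] using hy
  · intro h
    exact ⟨g⁻¹ * x * g, h, by group⟩

lemma conj_map_conj_map (a b : G) (K : Subgroup G) :
    Subgroup.map (MulAut.conj a).toMonoidHom (Subgroup.map (MulAut.conj b).toMonoidHom K) =
      Subgroup.map (MulAut.conj (a * b)).toMonoidHom K := by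
  have h : (MulAut.conj a).toMonoidHom.comp (MulAut.conj b).toMonoidHom =
      (MulAut.conj (a * b)).toMonoidHom := by
    ext x; simp [mul_assoc]
  rw [Subgroup.map_map, h]

lemma conj_map_self {h : G} (hh : h ∈ H) :
    Subgroup.map (MulAut.conj h).toMonoidHom H = H := by
  ext x
  rw [mem_conj_map]
  constructor
  · intro hx
    have := H.mul_mem (H.mul_mem hh hx) (H.inv_mem hh)
    simpa [mul_assoc] using this
  · intro hx
    exact H.mul_mem (H.mul_mem (H.inv_mem hh) hx) hh

lemma conj_map_inf {h : G} (hh : h ∈ H) (K : Subgroup G) :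
    Subgroup.map (MulAut.conj h).toMonoidHom (H ⊓ K) =
      H ⊓ Subgroup.map (MulAut.conj h).toMonoidHom K := by
  rw [Subgroup.map_inf _ _ _ (MulAut.conj h).injective, conj_map_self H hh]

lemma stab_map_eq (g : G) :
    Subgroup.map H.subtype (MulAction.stabilizer H ((g : G ⧸ G₀))) =
      H ⊓ Subgroup.map (MulAut.conj g).toMonoidHom G₀ := by
  ext x
  rw [Subgroup.mem_inf, mem_conj_map]
  simp only [Subgroup.mem_map, Subgroup.coe_subtype]
  constructor
  · rintro ⟨⟨y, hy⟩, hst, rfl⟩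
    refine ⟨hy, ?_⟩
    have hst' : (⟨y, hy⟩ : H) • ((g : G ⧸ G₀)) = (g : G ⧸ G₀) :=
      MulAction.mem_stabilizer_iff.mp hst
    erw [Subgroup.smul_def, MulAction.Quotient.smul_mk, smul_eq_mul] at hst'
    have := G₀.inv_mem ((QuotientGroup.eq (s := G₀)).mp hst')
    simpa [mul_assoc] using this
  · rintro ⟨hy, hk⟩
    refine ⟨⟨x, hy⟩, MulAction.mem_stabilizer_iff.mpr ?_, rfl⟩
    erw [Subgroup.smul_def, MulAction.Quotient.smul_mk, smul_eq_mul]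
    exact (QuotientGroup.eq (s := G₀)).mpr (by simpa [mul_assoc] using G₀.inv_mem hk)

lemma mem_orbit_iff_dc (g g' : G) :
    ((g : G ⧸ G₀)) ∈ MulAction.orbit H ((g' : G ⧸ G₀)) ↔ g ∈ doubleCoset H G₀ g' := by
  rw [MulAction.mem_orbit_iff]
  constructor
  · rintro ⟨⟨h, hh⟩, e⟩
    erw [Subgroup.smul_def, MulAction.Quotient.smul_mk, smul_eq_mul] at e
    have e' : ((h * g' : G) : G ⧸ G₀) = (g : G ⧸ G₀) := e
    have hk := (QuotientGroup.eq (s := G₀)).mp e'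
    exact ⟨h, hh, (h * g')⁻¹ * g, hk, by group⟩
  · rintro ⟨h, hh, k, hk, rfl⟩
    refine ⟨⟨h, hh⟩, ?_⟩
    erw [Subgroup.smul_def, MulAction.Quotient.smul_mk, smul_eq_mul]
    exact (QuotientGroup.eq (s := G₀)).mpr (by simpa [mul_assoc] using hk)

lemma subtype_map_conj (h : H) (S : Subgroup H) :
    Subgroup.map H.subtype (Subgroup.map (MulAut.conj h).toMonoidHom S) =
      Subgroup.map (MulAut.conj (h : G)).toMonoidHom (Subgroup.map H.subtype S) := by
  have h2 : H.subtype.comp (MulAut.conj h).toMonoidHom =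
      (MulAut.conj (h : G)).toMonoidHom.comp H.subtype := by
    ext x; simp
  rw [Subgroup.map_map, Subgroup.map_map, h2]

end aux

/-- given a complete set `G'` of representatives of the double cosets
`HgG₀` in `G`, a global cross section exists for the action of `H` on `G ⧸ G₀` iff
the subgroups `H ∩ g'G₀g'⁻¹`, `g' ∈ G'`, are all conjugate to one another in `H`. -/
theorem stmt_2 {G : Type*} [Group G] (H G₀ : Subgroup G) (G' : Set G)
    (hrep : ∀ g : G, ∃! g', g' ∈ G' ∧ g ∈ doubleCoset H G₀ g') :
    (∃ V : Set (G ⧸ G₀),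
        (∀ q : G ⧸ G₀, ∃! v, v ∈ V ∧ v ∈ MulAction.orbit H q) ∧
        ∀ v ∈ V, ∀ w ∈ V, MulAction.stabilizer H v = MulAction.stabilizer H w) ↔
    (∀ g₁ ∈ G', ∀ g₂ ∈ G', ∃ h ∈ H,
        H ⊓ Subgroup.map (MulAut.conj g₂).toMonoidHom G₀ =
          Subgroup.map (MulAut.conj h).toMonoidHom
            (H ⊓ Subgroup.map (MulAut.conj g₁).toMonoidHom G₀)) := by
  constructor
  · rintro ⟨V, hV, hstab⟩ g₁ hg₁ g₂ hg₂
    obtain ⟨v₁, ⟨hv₁V, hv₁o⟩, -⟩ := hV ((g₁ : G ⧸ G₀))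
    obtain ⟨v₂, ⟨hv₂V, hv₂o⟩, -⟩ := hV ((g₂ : G ⧸ G₀))
    obtain ⟨h₁, rfl⟩ := hv₁o
    obtain ⟨h₂, rfl⟩ := hv₂o
    have hst := hstab _ hv₁V _ hv₂V
    rw [MulAction.stabilizer_smul_eq_stabilizer_map_conj,
      MulAction.stabilizer_smul_eq_stabilizer_map_conj] at hst
    have hmap := congrArg (Subgroup.map H.subtype) hst
    rw [subtype_map_conj, subtype_map_conj, stab_map_eq, stab_map_eq] at hmap
    refine ⟨(h₂ : G)⁻¹ * (h₁ : G), H.mul_mem (H.inv_mem h₂.2) h₁.2, ?_⟩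
    have := congrArg (Subgroup.map (MulAut.conj ((h₂ : G)⁻¹)).toMonoidHom) hmap
    rw [conj_map_conj_map, conj_map_conj_map, inv_mul_cancel] at this
    have h1 : Subgroup.map (MulAut.conj (1 : G)).toMonoidHom
        (H ⊓ Subgroup.map (MulAut.conj g₂).toMonoidHom G₀) =
        H ⊓ Subgroup.map (MulAut.conj g₂).toMonoidHom G₀ := by
      have : (MulAut.conj (1 : G)).toMonoidHom = MonoidHom.id G := by ext x; simp
      rw [this, Subgroup.map_id]
    rw [h1] at this
    exact this.symm
  · intro hconj
    obtain ⟨e, ⟨heG', -⟩, -⟩ := hrep 1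
    -- choose for each g' ∈ G' an element h conjugating the base stabilizer
    have hch : ∀ g' ∈ G', ∃ h, h ∈ H ∧
        H ⊓ Subgroup.map (MulAut.conj g').toMonoidHom G₀ =
          Subgroup.map (MulAut.conj h).toMonoidHom
            (H ⊓ Subgroup.map (MulAut.conj e).toMonoidHom G₀) := by
      intro g' hg'
      obtain ⟨h, hh, he⟩ := hconj e heG' g' hg'
      exact ⟨h, hh, he⟩
    classical
    set f : G → G := fun g' => if hg' : g' ∈ G' then (hch g' hg').choose else 1 with hf
    have hfH : ∀ g' ∈ G', f g' ∈ H := by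
      intro g' hg'; simp only [hf, dif_pos hg']; exact (hch g' hg').choose_spec.1
    have hfE : ∀ g' ∈ G',
        H ⊓ Subgroup.map (MulAut.conj g').toMonoidHom G₀ =
          Subgroup.map (MulAut.conj (f g')).toMonoidHom
            (H ⊓ Subgroup.map (MulAut.conj e).toMonoidHom G₀) := by
      intro g' hg'; simp only [hf, dif_pos hg']; exact (hch g' hg').choose_spec.2
    refine ⟨(fun g' => (((f g')⁻¹ * g' : G) : G ⧸ G₀)) '' G', ?_, ?_⟩
    · intro q
      obtain ⟨g, rfl⟩ := QuotientGroup.mk_surjective q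
      obtain ⟨g', ⟨hg', hgd⟩, huniq⟩ := hrep g
      refine ⟨(((f g')⁻¹ * g' : G) : G ⧸ G₀), ⟨⟨g', hg', rfl⟩, ?_⟩, ?_⟩
      · -- membership in orbit of g : same orbit as g'
        have h1 : ((((f g')⁻¹ * g' : G)) : G ⧸ G₀) ∈ MulAction.orbit H ((g' : G ⧸ G₀)) :=
          (mem_orbit_iff_dc H G₀ _ _).mpr ⟨(f g')⁻¹, H.inv_mem (hfH g' hg'), 1, G₀.one_mem, by group⟩
        have h2 : ((g' : G ⧸ G₀)) ∈ MulAction.orbit H ((g : G ⧸ G₀)) := by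
          rw [MulAction.orbit_eq_iff.mpr ((mem_orbit_iff_dc H G₀ g g').mpr hgd)]
          exact (mem_orbit_iff_dc H G₀ g' g').mpr ⟨1, H.one_mem, 1, G₀.one_mem, by group⟩
        rw [← MulAction.orbit_eq_iff.mpr h2]
        exact h1
      · rintro v ⟨⟨g'', hg'', rfl⟩, hvo⟩
        -- g'' represents the same double coset as g
        have h1 : ((g'' : G ⧸ G₀)) ∈ MulAction.orbit H ((((f g'')⁻¹ * g'' : G)) : G ⧸ G₀) :=
          (mem_orbit_iff_dc H G₀ _ _).mpr ⟨f g'', hfH g'' hg'', 1, G₀.one_mem, by group⟩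
        have h2 : ((g'' : G ⧸ G₀)) ∈ MulAction.orbit H ((g : G ⧸ G₀)) := by
          rw [MulAction.orbit_eq_iff.mpr hvo] at h1
          exact h1
        have h3 : g'' ∈ doubleCoset H G₀ g := (mem_orbit_iff_dc H G₀ _ _).mp h2
        -- hence g ∈ doubleCoset g''
        obtain ⟨h, hh, k, hk, hgk⟩ := h3
        have h4 : g ∈ doubleCoset H G₀ g'' :=
          ⟨h⁻¹, H.inv_mem hh, k⁻¹, G₀.inv_mem hk, by rw [hgk]; group⟩
        rw [huniq g'' ⟨hg'', h4⟩]
    · -- common stabilizers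
      suffices hs : ∀ g' ∈ G', MulAction.stabilizer H ((((f g')⁻¹ * g' : G)) : G ⧸ G₀) =
          (H ⊓ Subgroup.map (MulAut.conj e).toMonoidHom G₀).comap H.subtype by
        rintro v ⟨g₁', hg₁', rfl⟩ w ⟨g₂', hg₂', rfl⟩
        rw [hs g₁' hg₁', hs g₂' hg₂']
      intro g' hg'
      apply Subgroup.map_injective H.subtype_injective
      rw [stab_map_eq]
      have e1 : Subgroup.map (MulAut.conj ((f g')⁻¹ * g')).toMonoidHom G₀ =
          Subgroup.map (MulAut.conj ((f g')⁻¹)).toMonoidHom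
            (Subgroup.map (MulAut.conj g').toMonoidHom G₀) := by
        rw [conj_map_conj_map]
      rw [e1, ← conj_map_inf H (H.inv_mem (hfH g' hg')), hfE g' hg', conj_map_conj_map,
        inv_mul_cancel]
      have h1 : (MulAut.conj (1 : G)).toMonoidHom = MonoidHom.id G := by ext x; simp
      rw [h1, Subgroup.map_id]
      -- now show map H.subtype (comap H.subtype K) = K when K ≤ H
      rw [Subgroup.map_comap_eq, Subgroup.range_subtype, ← inf_assoc, inf_idem]
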